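/- A subset S ⊆ C_s(G,X) satisfies the compactness axiom if and only if the following holds: whenever (g_n, x_n) → (g, x) in G × X and there exists a sequence of maps φ_n ∈ S with g_n ∈ dom φ_n and φ_n(g_n) = x_n, there exist a map ψ ∈ S with g ∈ dom ψ and ψ(g) = x, and a subsequence {(g_{n_i}, φ_{n_i})} such that (g_{n_i}, φ_{n_i}) → (g, ψ) in G × C_s(G,X). -/

import Mathlib

open Set Filter Topology TopologicalSpace

namespace Yorke

/-- The space `X̂ = X ∪ {ω}`, encoded as `Option X` with `ω = none`.  Its open sets are
`X̂` itself together with the open sets of `X`. -/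
instance hatTopology (X : Type*) [TopologicalSpace X] : TopologicalSpace (Option X) :=
  TopologicalSpace.generateFrom
    ({Set.univ} ∪ {s : Set (Option X) | ∃ u : Set X, IsOpen u ∧ s = (Option.some : X → Option X) '' u})

/-- The space `C_p(G,X)` of partial maps from `G` to `X` (continuous maps defined on a
nonempty open subset of `G`), encoded via the bijection `μ` with the subspace
`{f : C(G,X̂) | f⁻¹(X) ≠ ∅}` of `C(G,X̂)`; it carries the compact-open topology. -/
abbrev Cp (G X : Type*) [TopologicalSpace G] [TopologicalSpace X] : Type _ :=
  {f : C(G, Option X) // {g : G | f g ≠ none}.Nonempty}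

variable {G X : Type*} [TopologicalSpace G] [TopologicalSpace X]

/-- The domain of a partial map. -/
def dom (φ : Cp G X) : Set G := {g : G | φ.1 g ≠ none}

/-- A partial map with nonempty connected domain is maximally defined if every partial map
with nonempty connected domain which extends it is equal to it. -/
def MaximallyDefined (φ : Cp G X) : Prop :=
  IsConnected (dom φ) ∧
    ∀ ψ : Cp G X, IsConnected (dom ψ) → dom φ ⊆ dom ψ →
      (∀ g ∈ dom φ, φ.1 g = ψ.1 g) → φ = ψ

/-- The space `C_s(G,X)` of maximally defined partial maps, with the subspace topology. -/
abbrev Cs (G X : Type*) [TopologicalSpace G] [TopologicalSpace X] : Type _ :=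
  {φ : Cp G X // MaximallyDefined φ}

/-- The orbit `O(φ) = {φ(g) : g ∈ dom φ}`. -/
def orbit (φ : Cs G X) : Set X := {x : X | ∃ g : G, φ.1.1 g = some x}

/-- The star-construction `S*W = {(g,φ) : φ ∈ S, g ∈ dom φ, (g,φ(g)) ∈ W}`. -/
def star (S : Set (Cs G X)) (W : Set (G × X)) : Set (G × Cs G X) :=
  {p : G × Cs G X | p.2 ∈ S ∧ ∃ x : X, p.2.1.1 p.1 = some x ∧ (p.1, x) ∈ W}

/-- `S` satisfies the compactness axiom if `S*W` is compact for every compact `W`. -/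
def CompactnessAxiom (S : Set (Cs G X)) : Prop :=
  ∀ W : Set (G × X), IsCompact W → IsCompact (star S W)

/-- `S` satisfies the existence axiom on `W` if `S*{(t,x)}` is nonempty for all `(t,x) ∈ W`. -/
def ExistenceAxiom (S : Set (Cs G X)) (W : Set (G × X)) : Prop :=
  ∀ p ∈ W, (star S {p}).Nonempty

/-- `S` satisfies the uniqueness axiom on `W` if `S*{(t,x)}` is empty or a singleton. -/
def UniquenessAxiom (S : Set (Cs G X)) (W : Set (G × X)) : Prop :=
  ∀ p ∈ W, (star S {p}).Subsingleton

section GroupPart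

variable {G X : Type*} [TopologicalSpace X] [Group G] [TopologicalSpace G] [IsTopologicalGroup G]

/-- The shift `σ(g,φ)`, the partial map `x ↦ φ(xg)` with domain `(dom φ)g⁻¹`. -/
def shift (g : G) (φ : Cp G X) : Cp G X :=
  ⟨⟨fun x => φ.1 (x * g), φ.1.continuous.comp (continuous_mul_right g)⟩, by
    obtain ⟨g₀, hg₀⟩ := φ.2
    exact ⟨g₀ * g⁻¹, by simpa [inv_mul_cancel_right] using hg₀⟩⟩

/-- `S ⊆ C_s(G,X)` is `σ`-invariant if `σ(g,φ) ∈ S` for all `g ∈ G`, `φ ∈ S`. -/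
def SigmaInvariant (S : Set (Cs G X)) : Prop :=
  ∀ (g : G) (φ : Cs G X), φ ∈ S → ∃ ψ : Cs G X, ψ ∈ S ∧ ψ.1 = shift g φ.1

/-- `A ⊆ X` is weakly invariant with respect to `S` if every `x ∈ A` is the value at the
identity of some `φ ∈ S` with `O(φ) ⊆ A`. -/
def WeaklyInvariant (S : Set (Cs G X)) (A : Set X) : Prop :=
  ∀ x ∈ A, ∃ φ ∈ S, φ.1.1 (1 : G) = some x ∧ orbit φ ⊆ A

/-- `x` is an equilibrium of `S` if some `φ ∈ S` has `φ(e) = x` and `O(φ) = {x}`. -/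
def Equilibrium (S : Set (Cs G X)) (x : X) : Prop :=
  ∃ φ ∈ S, φ.1.1 (1 : G) = some x ∧ orbit φ = {x}

/-- The set of motions `{π(·,x) : x ∈ X} ⊆ C_s(G,X)` of a `G`-action `π`. -/
def actionSet (π : G × X → X) : Set (Cs G X) :=
  {φ : Cs G X | ∃ x : X, ∀ g : G, φ.1.1 g = some (π (g, x))}

end GroupPart

/-- An isomorphism `<H,k,η> : S*W → S'*W'` of star-constructions: the three maps are
homeomorphisms satisfying `ev ∘ H = k ∘ ev` and `p ∘ H = η ∘ p`. -/
structure StarIso {G X G' X' : Type*} [TopologicalSpace G] [TopologicalSpace X]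
    [TopologicalSpace G'] [TopologicalSpace X']
    (S : Set (Cs G X)) (W : Set (G × X)) (S' : Set (Cs G' X')) (W' : Set (G' × X')) where
  H : ↥(star S W) ≃ₜ ↥(star S' W')
  k : ↥W ≃ₜ ↥W'
  η : ↥S ≃ₜ ↥S'
  ev_comm : ∀ (q : ↥(star S W)) (x : X), q.1.2.1.1 q.1.1 = some x →
      ∀ hW : (q.1.1, x) ∈ W, ∀ x' : X', (H q).1.2.1.1 (H q).1.1 = some x' →
      ((k ⟨(q.1.1, x), hW⟩ : ↥W') : G' × X') = ((H q).1.1, x')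
  p_comm : ∀ q : ↥(star S W), (H q).1.2 = ((η ⟨q.1.2, q.2.1⟩ : ↥S') : Cs G' X')

/-- A map `k = (τ,h) : W → W'` preserves phase space if `h(g,x)` does not depend on `g`. -/
def PreservesPhase {G X G' X' : Type*} [TopologicalSpace G] [TopologicalSpace X]
    [TopologicalSpace G'] [TopologicalSpace X'] {W : Set (G × X)} {W' : Set (G' × X')}
    (k : ↥W → ↥W') : Prop :=
  ∀ w w' : ↥W, (w : G × X).2 = (w' : G × X).2 →
    ((k w : ↥W') : G' × X').2 = ((k w' : ↥W') : G' × X').2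

/-- Two continuous maps are isotopic if they are connected by a continuous family of
homeomorphisms parametrized by `[0,1]`. -/
def Isotopic {A B : Type*} [TopologicalSpace A] [TopologicalSpace B] (f₀ f₁ : A → B) : Prop :=
  ∃ F : unitInterval × A → B, Continuous F ∧ (∀ a, F (0, a) = f₀ a) ∧
    (∀ a, F (1, a) = f₁ a) ∧ ∀ s : unitInterval, IsHomeomorph fun a => F (s, a)

end Yorke

namespace Yorke

variable {G X : Type*} [Group G] [TopologicalSpace G] [IsTopologicalGroup G]
  [LocallyCompactSpace G] [SecondCountableTopology G] [T2Space G]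
  [MetricSpace X] [SecondCountableTopology X]

section Aux

variable {X : Type*} [TopologicalSpace X]

lemma isOpen_some_image {u : Set X} (hu : IsOpen u) :
    IsOpen ((some : X → Option X) '' u) :=
  isOpen_generateFrom_of_mem (Or.inr ⟨u, hu, rfl⟩)

lemma continuous_some : Continuous (some : X → Option X) := by
  rw [show (hatTopology X) = TopologicalSpace.generateFrom _ from rfl, continuous_generateFrom_iff]
  rintro s (rfl | ⟨u, hu, rfl⟩)
  · exact isOpen_univ
  · rw [Set.preimage_image_eq u (Option.some_injective X)]
    exact hu

lemma tendsto_some_unique [T2Space X] {β : Type*} {l : Filter β} [l.NeBot]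
    {f : β → Option X} {a b : X} (ha : Tendsto f l (𝓝 (some a)))
    (hb : Tendsto f l (𝓝 (some b))) : a = b := by
  by_contra hne
  obtain ⟨u, v, hu, hv, hau, hbv, huv⟩ := t2_separation hne
  have h1 : ∀ᶠ y in l, f y ∈ (some : X → Option X) '' u :=
    ha ((isOpen_some_image hu).mem_nhds ⟨a, hau, rfl⟩)
  have h2 : ∀ᶠ y in l, f y ∈ (some : X → Option X) '' v :=
    hb ((isOpen_some_image hv).mem_nhds ⟨b, hbv, rfl⟩)
  obtain ⟨y, ⟨p, hp, hp'⟩, ⟨q, hq, hq'⟩⟩ := (h1.and h2).exists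
  rw [← hq'] at hp'
  cases Option.some_injective X hp'
  exact huv.ne_of_mem hp hq rfl

instance optionSecondCountable [SecondCountableTopology X] :
    SecondCountableTopology (Option X) := by
  refine ⟨⟨insert Set.univ ((Set.image (some : X → Option X)) '' countableBasis X), ?_, ?_⟩⟩
  · exact (((countable_countableBasis X).image _).insert _)
  · apply le_antisymm
    · apply TopologicalSpace.generateFrom_anti
      rintro s (rfl | ⟨u, hu, rfl⟩)
      · exact Or.inl rfl
      · exact Or.inr ⟨u, isOpen_of_mem_countableBasis hu, rfl⟩
    · show TopologicalSpace.generateFrom _ ≤ TopologicalSpace.generateFrom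
          (({Set.univ} : Set (Set (Option X))) ∪
            {s | ∃ u : Set X, IsOpen u ∧ s = (Option.some : X → Option X) '' u})
      rw [TopologicalSpace.le_generateFrom_iff_subset_isOpen]
      rintro s (rfl | ⟨u, hu, rfl⟩)
      · exact TopologicalSpace.GenerateOpen.basic _ (mem_insert _ _)
      · show TopologicalSpace.GenerateOpen
          (insert Set.univ ((Set.image (some : X → Option X)) '' countableBasis X)) _
        have : (some : X → Option X) '' u =
            ⋃₀ ((fun v => (some : X → Option X) '' v) ''
              {v | v ∈ countableBasis X ∧ v ⊆ u}) := by
          rw [sUnion_image, ← image_iUnion₂]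
          exact congrArg _ (((isBasis_countableBasis X).open_eq_sUnion' hu).trans (by
            rw [sUnion_eq_biUnion]))
        rw [this]
        apply TopologicalSpace.GenerateOpen.sUnion
        rintro _ ⟨v, ⟨hv, -⟩, rfl⟩
        exact .basic _ (mem_insert_of_mem _ ⟨v, hv, rfl⟩)

end Aux

theorem IsSeqCompact.isCompact'' {α : Type*} [TopologicalSpace α] [SecondCountableTopology α]
    {s : Set α} (hs : IsSeqCompact s) : IsCompact s := by
  classical
  apply isCompact_of_finite_subcover
  intro ι U hUo hsU
  by_contra hcon
  push_neg at hcon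
  obtain ⟨T, hTc, hTU⟩ := TopologicalSpace.isOpen_iUnion_countable U hUo
  rcases T.eq_empty_or_nonempty with rfl | hTne
  · refine hcon ∅ ?_
    simp only [mem_empty_iff_false, iUnion_of_empty, iUnion_empty] at hTU
    simp only [Finset.notMem_empty, iUnion_of_empty, iUnion_empty]
    rw [← hTU] at hsU
    exact hsU
  · obtain ⟨e, he⟩ := hTc.exists_eq_range hTne
    have hcov : s ⊆ ⋃ n, U (e n) := by
      rw [← hTU, he, biUnion_range] at hsU
      exact hsU
    have hx : ∀ n : ℕ, ∃ y, y ∈ s ∧ y ∉ ⋃ k ∈ Finset.range (n + 1), U (e k) := by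
      intro n
      have h := hcon ((Finset.range (n + 1)).image e)
      rw [Set.not_subset] at h
      obtain ⟨y, hys, hyn⟩ := h
      refine ⟨y, hys, fun hmem => hyn ?_⟩
      simp only [mem_iUnion, exists_prop] at hmem ⊢
      obtain ⟨k, hk, hky⟩ := hmem
      exact ⟨e k, Finset.mem_image_of_mem e hk, hky⟩
    choose y hys hyn using hx
    obtain ⟨a, has, m, hm, hconv⟩ := hs hys
    obtain ⟨N, haN⟩ : ∃ N, a ∈ U (e N) := by
      have := hcov has
      simpa only [mem_iUnion] using this
    have hev : ∀ᶠ i in atTop, y (m i) ∈ U (e N) := hconv ((hUo _).mem_nhds haN)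
    obtain ⟨i, hiU, hiN⟩ := (hev.and (eventually_ge_atTop N)).exists
    refine hyn (m i) ?_
    have : N < m i + 1 := Nat.lt_succ_of_le (hiN.trans hm.le_apply)
    exact mem_biUnion (Finset.mem_range.2 this) hiU


section Main

variable {G X : Type*} [Group G] [TopologicalSpace G] [IsTopologicalGroup G]
  [LocallyCompactSpace G] [SecondCountableTopology G] [T2Space G]
  [MetricSpace X] [SecondCountableTopology X]

instance : SecondCountableTopology (Cp G X) :=
  secondCountableTopology_induced _ _ Subtype.val

instance : SecondCountableTopology (Cs G X) :=
  secondCountableTopology_induced _ _ Subtype.val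

theorem statement_4' (S : Set (Cs G X)) :
    CompactnessAxiom S ↔
      ∀ (g : ℕ → G) (x : ℕ → X) (g₀ : G) (x₀ : X) (φ : ℕ → Cs G X),
        Tendsto (fun n => (g n, x n)) atTop (𝓝 (g₀, x₀)) →
        (∀ n : ℕ, φ n ∈ S ∧ (φ n).1.1 (g n) = some (x n)) →
        ∃ ψ : Cs G X, ψ ∈ S ∧ ψ.1.1 g₀ = some x₀ ∧
          ∃ m : ℕ → ℕ, StrictMono m ∧
            Tendsto (fun i => (g (m i), φ (m i))) atTop (𝓝 (g₀, ψ)) := by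
  constructor
  · intro hC g x g₀ x₀ φ hgx hφ
    have hW : IsCompact (insert (g₀, x₀) (Set.range fun n => (g n, x n))) :=
      hgx.isCompact_insert_range
    have hmem : ∀ n, (g n, φ n) ∈ star S (insert (g₀, x₀) (Set.range fun n => (g n, x n))) :=
      fun n => ⟨(hφ n).1, x n, (hφ n).2, Or.inr ⟨n, rfl⟩⟩
    obtain ⟨⟨g₀', ψ⟩, hmem', m, hm, hconv0⟩ := (hC _ hW).tendsto_subseq hmem
    have hconv : Tendsto (fun i => (g (m i), φ (m i))) atTop (𝓝 (g₀', ψ)) := hconv0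
    have hgm : Tendsto (fun i => g (m i)) atTop (𝓝 g₀') :=
      (continuous_fst.tendsto _).comp hconv
    have hgm0 : Tendsto (fun i => g (m i)) atTop (𝓝 g₀) :=
      ((continuous_fst.tendsto _).comp hgx).comp hm.tendsto_atTop
    have hg : g₀' = g₀ := tendsto_nhds_unique hgm hgm0
    subst hg
    obtain ⟨hψS, y, hψy, hyW⟩ := hmem'
    have hφm : Tendsto (fun i => (φ (m i)).1.1) atTop (𝓝 ψ.1.1) :=
      ((continuous_subtype_val.comp continuous_subtype_val).tendsto ψ).comp
        ((continuous_snd.tendsto _).comp hconv)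
    have hev : Tendsto (fun i => (φ (m i)).1.1 (g (m i))) atTop (𝓝 (ψ.1.1 g₀')) :=
      (continuous_eval.tendsto (ψ.1.1, g₀')).comp (hφm.prodMk_nhds hgm)
    have hx0 : Tendsto (fun i => (φ (m i)).1.1 (g (m i))) atTop (𝓝 (some x₀)) := by
      have hxconv : Tendsto (fun i => x (m i)) atTop (𝓝 x₀) :=
        ((continuous_snd.tendsto _).comp hgx).comp hm.tendsto_atTop
      exact ((continuous_some.tendsto x₀).comp hxconv).congr
        fun i => ((hφ (m i)).2).symm
    rw [hψy] at hev
    have hyx : y = x₀ := tendsto_some_unique hev hx0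
    subst hyx
    exact ⟨ψ, hψS, hψy, m, hm, hconv⟩
  · intro h W hW
    apply IsSeqCompact.isCompact''
    intro q hq
    have hq1 : ∀ n, (q n).2 ∈ S := fun n => (hq n).1
    choose xx hx hxW using fun n => (hq n).2
    obtain ⟨⟨g₀, x₀⟩, hp₀, m1, hm1, hconv1⟩ :=
      hW.tendsto_subseq (x := fun n => ((q n).1, xx n)) hxW
    obtain ⟨ψ, hψS, hψv, m2, hm2, hconv2⟩ :=
      h (fun i => (q (m1 i)).1) (fun i => xx (m1 i)) g₀ x₀ (fun i => (q (m1 i)).2)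
        hconv1 (fun i => ⟨hq1 (m1 i), hx (m1 i)⟩)
    exact ⟨(g₀, ψ), ⟨hψS, x₀, hψv, hp₀⟩, m1 ∘ m2, hm1.comp hm2, hconv2⟩

end Main

/-- The compactness axiom is equivalent to a Kamke-type convergence property. -/
theorem statement_4 (S : Set (Cs G X)) :
    CompactnessAxiom S ↔
      ∀ (g : ℕ → G) (x : ℕ → X) (g₀ : G) (x₀ : X) (φ : ℕ → Cs G X),
        Tendsto (fun n => (g n, x n)) atTop (𝓝 (g₀, x₀)) →
        (∀ n : ℕ, φ n ∈ S ∧ (φ n).1.1 (g n) = some (x n)) →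
        ∃ ψ : Cs G X, ψ ∈ S ∧ ψ.1.1 g₀ = some x₀ ∧
          ∃ m : ℕ → ℕ, StrictMono m ∧
            Tendsto (fun i => (g (m i), φ (m i))) atTop (𝓝 (g₀, ψ)) := by
  exact statement_4' S

end Yorke
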